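/- Let a < 1, b > -1, c ∈ ℝ with 2a + b - c > 0. Then ∫_{-1}^{1} |x|^b (∫_1^{1/|x|} u^c (u² - 1)^{-a} du) dx = Γ(1-a) Γ((2a+b-c)/2) / ((b+1) Γ((2+b-c)/2)). -/

import Mathlib

open Real MeasureTheory Set

section Aux

/-! ### Real Beta integral -/

lemma beta_ptwise {p q : ℝ} {x : ℝ} (hx : x ∈ Set.Ioo (0:ℝ) 1) :
    (x:ℂ) ^ ((p:ℂ) - 1) * (1 - (x:ℂ)) ^ ((q:ℂ) - 1)
      = ((x ^ (p-1) * (1-x) ^ (q-1) : ℝ) : ℂ) := by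
  have hx0 : (0:ℝ) ≤ x := hx.1.le
  have hx1 : (0:ℝ) ≤ 1 - x := by linarith [hx.2]
  rw [show ((p:ℂ) - 1) = ((p - 1 : ℝ) : ℂ) by push_cast; ring,
    show ((q:ℂ) - 1) = ((q - 1 : ℝ) : ℂ) by push_cast; ring,
    ← Complex.ofReal_cpow hx0, show (1 - (x:ℂ)) = ((1 - x : ℝ) : ℂ) by push_cast; ring,
    ← Complex.ofReal_cpow hx1, ← Complex.ofReal_mul]

lemma real_beta_integrable {p q : ℝ} (hp : 0 < p) (hq : 0 < q) :
    IntegrableOn (fun t : ℝ => t ^ (p-1) * (1-t) ^ (q-1)) (Set.Ioo (0:ℝ) 1) := by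
  have h := Complex.betaIntegral_convergent (u := (p:ℂ)) (v := (q:ℂ)) (by simpa) (by simpa)
  rw [intervalIntegrable_iff_integrableOn_Ioo_of_le zero_le_one] at h
  refine h.re.congr ?_
  filter_upwards [ae_restrict_mem measurableSet_Ioo] with x hx
  rw [beta_ptwise hx]
  simp

lemma real_beta {p q : ℝ} (hp : 0 < p) (hq : 0 < q) :
    ∫ t in Set.Ioo (0:ℝ) 1, t ^ (p-1) * (1-t) ^ (q-1)
      = Real.Gamma p * Real.Gamma q / Real.Gamma (p+q) := by
  have h := Complex.Gamma_mul_Gamma_eq_betaIntegral (s := (p:ℂ)) (t := (q:ℂ)) (by simpa) (by simpa)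
  have hβ : Complex.betaIntegral p q
      = ((∫ t in Set.Ioo (0:ℝ) 1, t ^ (p-1) * (1-t) ^ (q-1) : ℝ) : ℂ) := by
    rw [Complex.betaIntegral, intervalIntegral.integral_of_le zero_le_one,
      MeasureTheory.integral_Ioc_eq_integral_Ioo,
      setIntegral_congr_fun measurableSet_Ioo (fun x hx => beta_ptwise (p := p) (q := q) hx)]
    exact integral_ofReal
  rw [hβ] at h
  have : ((Real.Gamma p * Real.Gamma q : ℝ) : ℂ)
      = ((Real.Gamma (p+q) * ∫ t in Set.Ioo (0:ℝ) 1, t ^ (p-1) * (1-t) ^ (q-1) : ℝ) : ℂ) := by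
    push_cast
    rw [← Complex.Gamma_ofReal, ← Complex.Gamma_ofReal, ← Complex.Gamma_ofReal]
    push_cast
    exact h
  have h2 := Complex.ofReal_injective this
  have hG : Real.Gamma (p+q) ≠ 0 := (Real.Gamma_pos_of_pos (by linarith)).ne'
  field_simp
  linarith [h2]

/-! ### Integral of `|x| ^ b` over symmetric intervals -/

lemma abs_rpow_integrableOn_pos {b d : ℝ} (hb : -1 < b) (hd : 0 < d) :
    IntegrableOn (fun x : ℝ => |x| ^ b) (Set.Ioo 0 d) := by
  refine ((intervalIntegral.integrableOn_Ioo_rpow_iff hd).2 hb).congr_fun (fun x hx => ?_)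
    measurableSet_Ioo
  rw [abs_of_pos hx.1]

lemma abs_rpow_int_pos {b d : ℝ} (hb : -1 < b) (hd : 0 < d) :
    ∫ x in Set.Ioo 0 d, |x| ^ b = d ^ (b + 1) / (b + 1) := by
  rw [setIntegral_congr_fun measurableSet_Ioo
    (fun x (hx : x ∈ Set.Ioo 0 d) => by rw [abs_of_pos hx.1]),
    ← MeasureTheory.integral_Ioc_eq_integral_Ioo, ← intervalIntegral.integral_of_le hd.le,
    integral_rpow (Or.inl hb), Real.zero_rpow (by linarith : b + 1 ≠ 0), sub_zero]

lemma neg_image {d : ℝ} : (fun x : ℝ => -x) '' Set.Ioo 0 d = Set.Ioo (-d) 0 := by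
  rw [Set.image_neg_eq_neg, Set.neg_Ioo, neg_zero]

lemma neg_deriv {d : ℝ} : ∀ x ∈ Set.Ioo (0:ℝ) d,
    HasDerivWithinAt (fun x : ℝ => -x) ((fun _ : ℝ => (-1:ℝ)) x) (Set.Ioo 0 d) x :=
  fun x _ => (hasDerivAt_neg x).hasDerivWithinAt

lemma abs_rpow_integrableOn_neg {b d : ℝ} (hb : -1 < b) (hd : 0 < d) :
    IntegrableOn (fun x : ℝ => |x| ^ b) (Set.Ioo (-d) 0) := by
  rw [← neg_image,
    integrableOn_image_iff_integrableOn_abs_deriv_smul measurableSet_Ioo neg_deriv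
      (fun x _ y _ h => by simpa using h)]
  simpa using abs_rpow_integrableOn_pos hb hd

lemma Ioo_split {d : ℝ} (hd : 0 < d) :
    Set.Ioo (-d) d = Set.Ioo (-d) 0 ∪ Set.Ico 0 d := by
  ext x
  simp only [mem_Ioo, mem_union, mem_Ico]
  constructor
  · rintro ⟨h1, h2⟩
    rcases lt_or_ge x 0 with h | h
    · exact Or.inl ⟨h1, h⟩
    · exact Or.inr ⟨h, h2⟩
  · rintro (⟨h1, h2⟩ | ⟨h1, h2⟩) <;> constructor <;> linarith

lemma abs_rpow_integrableOn {b d : ℝ} (hb : -1 < b) (hd : 0 < d) :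
    IntegrableOn (fun x : ℝ => |x| ^ b) (Set.Ioo (-d) d) := by
  rw [Ioo_split hd]
  exact (abs_rpow_integrableOn_neg hb hd).union
    ((integrableOn_Ico_iff_integrableOn_Ioo).2 (abs_rpow_integrableOn_pos hb hd))

lemma abs_rpow_int {b d : ℝ} (hb : -1 < b) (hd : 0 < d) :
    ∫ x in Set.Ioo (-d) d, |x| ^ b = 2 * d ^ (b + 1) / (b + 1) := by
  have hneg : ∫ x in Set.Ioo (-d) 0, |x| ^ b = d ^ (b + 1) / (b + 1) := by
    rw [← neg_image, integral_image_eq_integral_abs_deriv_smul measurableSet_Ioo neg_deriv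
      (fun x _ y _ h => by simpa using h)]
    simp only [abs_neg, abs_one, one_smul, abs_of_nonneg]
    exact abs_rpow_int_pos hb hd
  rw [Ioo_split hd, setIntegral_union (by rw [Set.disjoint_left]; rintro x ⟨_, h2⟩ ⟨h3, _⟩; linarith)
    measurableSet_Ico (abs_rpow_integrableOn_neg hb hd)
    ((integrableOn_Ico_iff_integrableOn_Ioo).2 (abs_rpow_integrableOn_pos hb hd)),
    MeasureTheory.integral_Ico_eq_integral_Ioo, hneg, abs_rpow_int_pos hb hd]
  ring

/-! ### The integral over `(1, ∞)` via the substitution `u = t ^ (-1/2)` -/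

lemma subst_ptwise {a r : ℝ} {t : ℝ} (ht : t ∈ Set.Ioo (0:ℝ) 1) :
    |(-(1/2) : ℝ) * t ^ (-(1/2) - 1 : ℝ)| •
      ((t ^ (-(1/2) : ℝ)) ^ r * ((t ^ (-(1/2) : ℝ)) ^ 2 - 1) ^ (-a))
    = (1/2) * (t ^ ((2*a - r - 1)/2 - 1) * (1-t) ^ ((1 - a) - 1)) := by
  obtain ⟨ht0, ht1⟩ := ht
  have hsq : (t ^ (-(1/2) : ℝ)) ^ 2 = t⁻¹ := by
    rw [← Real.rpow_natCast (t ^ (-(1/2):ℝ)) 2, ← Real.rpow_mul ht0.le]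
    norm_num [Real.rpow_neg_one]
  have hfrac : t⁻¹ - 1 = (1-t)/t := by field_simp
  have hpow : ((1-t)/t) ^ (-a) = (1-t) ^ (-a) * t ^ a := by
    rw [Real.div_rpow (by linarith) ht0.le, Real.rpow_neg ht0.le, div_inv_eq_mul]
  have hr' : (t ^ (-(1/2):ℝ)) ^ r = t ^ ((-(1/2)) * r) := (Real.rpow_mul ht0.le _ _).symm
  have habs : |(-(1/2) : ℝ) * t ^ (-(1/2) - 1 : ℝ)| = (1/2) * t ^ (-(1/2) - 1 : ℝ) := by
    rw [abs_mul, abs_of_pos (Real.rpow_pos_of_pos ht0 _)]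
    norm_num
  rw [smul_eq_mul, habs, hsq, hfrac, hpow, hr',
    show (1 - a) - 1 = -a by ring,
    show t ^ ((2*a - r - 1)/2 - 1) = t ^ (-(1/2) - 1 : ℝ) * t ^ ((-(1/2)) * r) * t ^ a by
      rw [← Real.rpow_add ht0, ← Real.rpow_add ht0]; congr 1; ring]
  ring

lemma subst_image : (fun t : ℝ => t ^ (-(1/2) : ℝ)) '' Set.Ioo 0 1 = Set.Ioi 1 := by
  ext y
  simp only [mem_image, mem_Ioi, mem_Ioo]
  constructor
  · rintro ⟨t, ⟨ht0, ht1⟩, rfl⟩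
    exact (Real.one_lt_rpow_iff_of_pos ht0).2 (Or.inr ⟨ht1, by norm_num⟩)
  · intro hy
    have hy0 : 0 < y := lt_trans one_pos hy
    refine ⟨y ^ (-2 : ℝ), ⟨Real.rpow_pos_of_pos hy0 _,
      Real.rpow_lt_one_of_one_lt_of_neg hy (by norm_num)⟩, ?_⟩
    rw [← Real.rpow_mul hy0.le, show (-2 : ℝ) * (-(1/2)) = 1 by norm_num, Real.rpow_one]

lemma subst_deriv : ∀ t ∈ Set.Ioo (0:ℝ) 1,
    HasDerivWithinAt (fun t : ℝ => t ^ (-(1/2) : ℝ))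
      ((fun t : ℝ => (-(1/2) : ℝ) * t ^ (-(1/2) - 1 : ℝ)) t) (Set.Ioo 0 1) t :=
  fun t ht => (Real.hasDerivAt_rpow_const (Or.inl ht.1.ne')).hasDerivWithinAt

lemma subst_inj : Set.InjOn (fun t : ℝ => t ^ (-(1/2) : ℝ)) (Set.Ioo 0 1) := by
  intro s hs t ht h
  simp only at h
  have : (s ^ (-(1/2):ℝ)) ^ (-2:ℝ) = (t ^ (-(1/2):ℝ)) ^ (-2:ℝ) := by rw [h]
  rwa [← Real.rpow_mul hs.1.le, ← Real.rpow_mul ht.1.le,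
    show (-(1/2) : ℝ) * (-2) = 1 by norm_num, Real.rpow_one, Real.rpow_one] at this

lemma J_integrable {a r : ℝ} (ha : a < 1) (hr : 0 < 2*a - r - 1) :
    IntegrableOn (fun u : ℝ => u ^ r * (u ^ 2 - 1) ^ (-a)) (Set.Ioi (1:ℝ)) := by
  rw [← subst_image, integrableOn_image_iff_integrableOn_abs_deriv_smul measurableSet_Ioo
    subst_deriv subst_inj]
  refine Integrable.congr ((real_beta_integrable (by linarith : 0 < (2*a - r - 1)/2)
    (by linarith : 0 < 1 - a)).const_mul (1/2)) ?_
  filter_upwards [ae_restrict_mem measurableSet_Ioo] with t ht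
  exact (subst_ptwise ht).symm

lemma J_value {a r : ℝ} (ha : a < 1) (hr : 0 < 2*a - r - 1) :
    ∫ u in Set.Ioi (1:ℝ), u ^ r * (u ^ 2 - 1) ^ (-a)
      = (1/2) * (Real.Gamma ((2*a - r - 1)/2) * Real.Gamma (1 - a)
          / Real.Gamma ((2*a - r - 1)/2 + (1 - a))) := by
  rw [← subst_image, integral_image_eq_integral_abs_deriv_smul measurableSet_Ioo
    subst_deriv subst_inj,
    setIntegral_congr_fun measurableSet_Ioo (fun t ht => subst_ptwise ht),
    integral_const_mul, real_beta (by linarith : 0 < (2*a - r - 1)/2) (by linarith : 0 < 1 - a)]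

/-! ### The Fubini kernel -/

noncomputable def fubKer (a b c : ℝ) : ℝ → ℝ → ℝ :=
  fun x u => ({q : ℝ × ℝ | |q.1| * q.2 < 1}).indicator
    (fun q => |q.1| ^ b * (q.2 ^ c * (q.2 ^ 2 - 1) ^ (-a))) (x, u)

lemma fubKer_meas (a b c : ℝ) : Measurable (Function.uncurry (fubKer a b c)) := by
  have h : Function.uncurry (fubKer a b c) = ({q : ℝ × ℝ | |q.1| * q.2 < 1}).indicator
      (fun q => |q.1| ^ b * (q.2 ^ c * (q.2 ^ 2 - 1) ^ (-a))) := by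
    funext p; cases p; rfl
  rw [h]
  exact Measurable.indicator (by fun_prop)
    ((isOpen_lt (continuous_fst.abs.mul continuous_snd) continuous_const).measurableSet)

lemma fubKer_nonneg {a b c x u : ℝ} (hu : 1 < u) : 0 ≤ fubKer a b c x u := by
  refine Set.indicator_apply_nonneg (fun _ => ?_)
  have h1 : (0:ℝ) ≤ u ^ 2 - 1 := by nlinarith
  exact mul_nonneg (Real.rpow_nonneg (abs_nonneg _) _)
    (mul_nonneg (Real.rpow_nonneg (by linarith) _) (Real.rpow_nonneg h1 _))

lemma fub_fiber_u {a b c : ℝ} {u : ℝ} (hu : 1 < u) :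
    (fun x => fubKer a b c x u)
      = (Set.Ioo (-(1/u)) (1/u)).indicator
          (fun x => |x| ^ b * (u ^ c * (u ^ 2 - 1) ^ (-a))) := by
  funext x
  simp only [fubKer, Set.indicator_apply, Set.mem_setOf_eq, Set.mem_Ioo]
  refine if_congr ?_ rfl rfl
  rw [← abs_lt, lt_div_iff₀ (by linarith : (0:ℝ) < u)]

lemma fub_fiber_x {a b c : ℝ} {x : ℝ} (hx0 : 0 < |x|) :
    (fun u => fubKer a b c x u)
      = (Set.Iio (1/|x|)).indicator
          (fun u => |x| ^ b * (u ^ c * (u ^ 2 - 1) ^ (-a))) := by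
  funext u
  simp only [fubKer, Set.indicator_apply, Set.mem_setOf_eq, Set.mem_Iio]
  refine if_congr ?_ rfl rfl
  rw [lt_div_iff₀ hx0, mul_comm]

lemma fub_inner_u {a b c : ℝ} {x : ℝ} (hx0 : 0 < |x|) :
    ∫ u in Set.Ioi (1:ℝ), fubKer a b c x u
      = |x| ^ b * ∫ u in Set.Ioo 1 (1/|x|), u ^ c * (u ^ 2 - 1) ^ (-a) := by
  rw [fub_fiber_x hx0, integral_indicator measurableSet_Iio,
    Measure.restrict_restrict measurableSet_Iio,
    show Set.Iio (1/|x|) ∩ Set.Ioi 1 = Set.Ioo 1 (1/|x|) by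
      ext y; simp only [mem_inter_iff, mem_Iio, mem_Ioi, mem_Ioo]; exact and_comm,
    integral_const_mul]

lemma fub_inner_x {a b c : ℝ} (hb : -1 < b) {u : ℝ} (hu : 1 < u) :
    ∫ x in Set.Ioo (-1:ℝ) 1, fubKer a b c x u
      = (2/(b+1)) * (u ^ (c - b - 1) * (u ^ 2 - 1) ^ (-a)) := by
  have hu0 : (0:ℝ) < u := by linarith
  have hd : (0:ℝ) < 1/u := by positivity
  have hsub : Set.Ioo (-(1/u)) (1/u) ∩ Set.Ioo (-1:ℝ) 1 = Set.Ioo (-(1/u)) (1/u) := by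
    refine inter_eq_left.2 (Set.Ioo_subset_Ioo ?_ ?_)
    · simp only [neg_le_neg_iff]
      rw [div_le_one hu0]
      linarith
    · rw [div_le_one hu0]
      linarith
  rw [fub_fiber_u hu, integral_indicator measurableSet_Ioo,
    Measure.restrict_restrict measurableSet_Ioo, hsub, integral_mul_const,
    abs_rpow_int hb hd]
  have h1 : (1/u) ^ (b+1) = u ^ (-(b+1)) := by
    rw [one_div, ← Real.rpow_neg_one u, ← Real.rpow_mul hu0.le]
    norm_num
  have h2 : u ^ (-(b+1)) * u ^ c = u ^ (c - b - 1) := by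
    rw [← Real.rpow_add hu0]; congr 1; ring
  rw [h1, ← h2]
  ring

lemma fub_fiber_integrable {a b c : ℝ} (hb : -1 < b) {u : ℝ} (hu : 1 < u) :
    Integrable (fun x => fubKer a b c x u) (volume.restrict (Set.Ioo (-1:ℝ) 1)) := by
  have hd : (0:ℝ) < 1/u := by positivity
  rw [fub_fiber_u hu, integrable_indicator_iff measurableSet_Ioo, IntegrableOn,
    Measure.restrict_restrict measurableSet_Ioo,
    show Set.Ioo (-(1/u)) (1/u) ∩ Set.Ioo (-1:ℝ) 1 = Set.Ioo (-(1/u)) (1/u) by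
      refine inter_eq_left.2 (Set.Ioo_subset_Ioo ?_ ?_)
      · simp only [neg_le_neg_iff]
        rw [div_le_one (by linarith : (0:ℝ) < u)]
        linarith
      · rw [div_le_one (by linarith : (0:ℝ) < u)]
        linarith]
  exact (abs_rpow_integrableOn hb hd).mul_const _

lemma fub_integrable {a b c : ℝ} (ha : a < 1) (hb : -1 < b) (habc : 0 < 2 * a + b - c) :
    Integrable (Function.uncurry (fubKer a b c))
      ((volume.restrict (Set.Ioo (-1:ℝ) 1)).prod (volume.restrict (Set.Ioi (1:ℝ)))) := by
  rw [integrable_prod_iff' (fubKer_meas a b c).aestronglyMeasurable]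
  constructor
  · filter_upwards [ae_restrict_mem measurableSet_Ioi] with u hu
    exact fub_fiber_integrable hb hu
  · refine Integrable.congr ((J_integrable ha
      (by linarith : 0 < 2*a - (c - b - 1) - 1)).const_mul (2/(b+1))) ?_
    filter_upwards [ae_restrict_mem measurableSet_Ioi] with u hu
    have hnorm : (fun x => ‖Function.uncurry (fubKer a b c) (x, u)‖)
        = fun x => fubKer a b c x u := by
      funext x
      exact Real.norm_of_nonneg (fubKer_nonneg hu)
    rw [hnorm, fub_inner_x hb hu]

end Aux

theorem double_integral_gamma (a b c : ℝ) (ha : a < 1) (hb : -1 < b) (habc : 0 < 2 * a + b - c) :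
    (∫ x in Set.Ioo (-1:ℝ) 1, |x| ^ b * ∫ u in Set.Ioo 1 (1 / |x|), u ^ c * (u ^ 2 - 1) ^ (-a))
      = Real.Gamma (1 - a) * Real.Gamma ((2 * a + b - c) / 2)
        / ((b + 1) * Real.Gamma ((2 + b - c) / 2)) := by
  have hb1 : (0:ℝ) < b + 1 := by linarith
  have h1 : (∫ x in Set.Ioo (-1:ℝ) 1, |x| ^ b * ∫ u in Set.Ioo 1 (1 / |x|),
        u ^ c * (u ^ 2 - 1) ^ (-a))
      = ∫ x in Set.Ioo (-1:ℝ) 1, ∫ u in Set.Ioi (1:ℝ), fubKer a b c x u := by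
    refine integral_congr_ae ?_
    have hne : ∀ᵐ x : ℝ ∂(volume.restrict (Set.Ioo (-1:ℝ) 1)), x ≠ 0 := by
      refine ae_restrict_of_ae ?_
      have := measure_eq_zero_iff_ae_notMem.mp (measure_singleton (0:ℝ) (μ := volume))
      simpa using this
    filter_upwards [hne] with x hx
    exact (fub_inner_u (abs_pos.mpr hx)).symm
  rw [h1, integral_integral_swap (fub_integrable ha hb habc)]
  have h2 : (∫ u in Set.Ioi (1:ℝ), ∫ x in Set.Ioo (-1:ℝ) 1, fubKer a b c x u)
      = (2/(b+1)) * ∫ u in Set.Ioi (1:ℝ), u ^ (c - b - 1) * (u ^ 2 - 1) ^ (-a) := by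
    rw [← integral_const_mul]
    refine integral_congr_ae ?_
    filter_upwards [ae_restrict_mem measurableSet_Ioi] with u hu
    exact fub_inner_x hb hu
  rw [h2, J_value ha (by linarith : 0 < 2*a - (c - b - 1) - 1),
    show (2*a - (c - b - 1) - 1)/2 = (2*a + b - c)/2 by ring,
    show (2*a + b - c)/2 + (1 - a) = (2 + b - c)/2 by ring]
  have hG : Real.Gamma ((2 + b - c)/2) ≠ 0 :=
    (Real.Gamma_pos_of_pos (by linarith)).ne'
  field_simp
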